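/- arXiv:2511.09424 — 5 statements merged into one kernel-verified Lean document; each statement's English description precedes it below -/
import Mathlib

section
/- If ψ, ψ': Δ(Ω) → ℝ∪{∞} are convex with ψ(p₀) = ψ'(p₀) = 0, p₀ in the relative interior of both domains, and ∫ψ dπ = ∫ψ' dπ for every finitely supported π with barycenter p₀, then dom ψ = dom ψ' and there exists ξ ∈ ℝ^Ω such that ψ(p) = ψ'(p) + ξ·(p − p₀) for all p ∈ dom ψ. -/
set_option linter.unusedSectionVars false
set_option linter.unusedVariables false


open Finset

def simplex (Ω : Type*) [Fintype Ω] : Set (Ω → ℝ) :=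
  {p | (∀ ω, 0 ≤ p ω) ∧ ∑ ω, p ω = 1}

/-- A finitely supported probability distribution over posteriors in `Δ(Ω)`. -/
structure FinDist (Ω : Type*) [Fintype Ω] where
  w : (Ω → ℝ) →₀ ℝ
  nonneg : ∀ p, 0 ≤ w p
  total : w.sum (fun _ x => x) = 1
  supp_mem : ∀ p ∈ w.support, p ∈ simplex Ω

variable {Ω : Type*} [Fintype Ω]

/-- Barycenter of a distribution over posteriors. -/
def bary (π : FinDist Ω) : Ω → ℝ := π.w.sum (fun p x => x • p)

/-- Expected value of a real function of the posterior. -/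
def eVal (π : FinDist Ω) (φ : (Ω → ℝ) → ℝ) : ℝ := π.w.sum (fun p x => x * φ p)

/-- The value of a gross payoff `φ`: `V(φ) = sup_{π ∈ Π(p₀)} ∫φ dπ − c(π)`. -/
noncomputable def V (c : FinDist Ω → EReal) (p₀ : Ω → ℝ) (φ : (Ω → ℝ) → ℝ) : EReal :=
  ⨆ π : {π : FinDist Ω // bary π = p₀}, (((eVal π.1 φ : ℝ) : EReal) - c π.1)

open Classical in
/-- Extended (`ℝ ∪ {∞}`-valued) integral of a measure of uncertainty `ψ` with domain `D`:
finite (`∫ψ dπ`) if the support of `π` lies in `D`, and `∞` otherwise. -/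
noncomputable def extInt (D : Set (Ω → ℝ)) (ψ : (Ω → ℝ) → ℝ) (π : FinDist Ω) : EReal :=
  if (π.w.support : Set (Ω → ℝ)) ⊆ D then ((eVal π ψ : ℝ) : EReal) else ⊤


section Aux


lemma raw_sum {M : Type*} [AddCommGroup M] [Module ℝ M] (pts : Fin 3 → Ω → ℝ) (a : Fin 3 → ℝ)
    (g : (Ω → ℝ) → M) :
    (∑ i, a i • Finsupp.single (pts i) (1:ℝ)).sum (fun p x => x • g p) = ∑ i, a i • g (pts i) := by
  rw [← Finsupp.linearCombination_apply]
  simp [map_sum, map_smul, Finsupp.linearCombination_single]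

lemma raw_apply (pts : Fin 3 → Ω → ℝ) (a : Fin 3 → ℝ) (x : Ω → ℝ) :
    (∑ i, a i • Finsupp.single (pts i) (1:ℝ)) x
      = ∑ i, a i * (if pts i = x then (1:ℝ) else 0) := by
  rw [Finsupp.finset_sum_apply]
  refine Finset.sum_congr rfl fun i _ => ?_
  rw [Finsupp.smul_apply, Finsupp.single_apply, smul_eq_mul]

lemma raw_supp (pts : Fin 3 → Ω → ℝ) (a : Fin 3 → ℝ) (x : Ω → ℝ)
    (hx : x ∈ (∑ i, a i • Finsupp.single (pts i) (1:ℝ)).support) : ∃ i, pts i = x := by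
  by_contra h
  push_neg at h
  apply Finsupp.mem_support_iff.mp hx
  rw [raw_apply]
  exact Finset.sum_eq_zero fun i _ => by simp [h i]

lemma raw_ge (pts : Fin 3 → Ω → ℝ) (a : Fin 3 → ℝ) (ha : ∀ i, 0 ≤ a i) (i₀ : Fin 3) :
    a i₀ ≤ (∑ i, a i • Finsupp.single (pts i) (1:ℝ)) (pts i₀) := by
  rw [raw_apply]
  have h0 : ∀ i ∈ Finset.univ, (0:ℝ) ≤ a i * (if pts i = pts i₀ then (1:ℝ) else 0) :=
    fun i _ => mul_nonneg (ha i) (by split <;> norm_num)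
  calc a i₀ = a i₀ * (if pts i₀ = pts i₀ then (1:ℝ) else 0) := by simp
    _ ≤ _ := Finset.single_le_sum h0 (Finset.mem_univ i₀)

noncomputable def mk3 (pts : Fin 3 → Ω → ℝ) (a : Fin 3 → ℝ) (ha : ∀ i, 0 ≤ a i)
    (hsum : ∑ i, a i = 1) (hmem : ∀ i, pts i ∈ simplex Ω) : FinDist Ω where
  w := ∑ i, a i • Finsupp.single (pts i) 1
  nonneg := fun p => by
    rw [raw_apply]
    exact Finset.sum_nonneg fun i _ => mul_nonneg (ha i) (by split <;> norm_num)
  total := by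
    have h := raw_sum pts a (fun _ => (1:ℝ))
    simpa [smul_eq_mul, hsum] using h
  supp_mem := fun p hp => by
    obtain ⟨i, hi⟩ := raw_supp pts a p hp
    exact hi ▸ hmem i

lemma mk3_bary (pts : Fin 3 → Ω → ℝ) (a : Fin 3 → ℝ) (ha : ∀ i, 0 ≤ a i)
    (hsum : ∑ i, a i = 1) (hmem : ∀ i, pts i ∈ simplex Ω) :
    bary (mk3 pts a ha hsum hmem) = ∑ i, a i • pts i :=
  raw_sum pts a id

lemma mk3_eVal (pts : Fin 3 → Ω → ℝ) (a : Fin 3 → ℝ) (ha : ∀ i, 0 ≤ a i)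
    (hsum : ∑ i, a i = 1) (hmem : ∀ i, pts i ∈ simplex Ω) (φ : (Ω → ℝ) → ℝ) :
    eVal (mk3 pts a ha hsum hmem) φ = ∑ i, a i * φ (pts i) :=
  raw_sum pts a φ

example (n : ℕ) : n = n := rfl

lemma small_step {D : Set (Ω → ℝ)} {p₀ : Ω → ℝ} (hri : p₀ ∈ intrinsicInterior ℝ D)
    (w : Ω → ℝ) (hw : w ∈ vectorSpan ℝ D) : ∃ ε : ℝ, 0 < ε ∧ p₀ + ε • w ∈ D := by
  obtain ⟨x, hx, hxp⟩ := hri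
  have hp₀A : p₀ ∈ affineSpan ℝ D := hxp ▸ x.2
  have hmemA : ∀ t : ℝ, p₀ + t • w ∈ affineSpan ℝ D := by
    intro t
    have : t • w ∈ (affineSpan ℝ D).direction := by
      rw [direction_affineSpan]
      exact Submodule.smul_mem _ t hw
    simpa [add_comm] using AffineSubspace.vadd_mem_of_mem_direction this hp₀A
  set c : ℝ → affineSpan ℝ D := fun t => ⟨p₀ + t • w, hmemA t⟩ with hc
  have hcont : Continuous c := by
    apply Continuous.subtype_mk
    exact continuous_const.add (continuous_id.smul continuous_const)
  have hc0 : c 0 = x := by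
    apply Subtype.ext
    simp [hc, hxp]
  have hopen : IsOpen (c ⁻¹' interior (((↑) : affineSpan ℝ D → Ω → ℝ) ⁻¹' D)) :=
    isOpen_interior.preimage hcont
  have h0mem : (0:ℝ) ∈ c ⁻¹' interior (((↑) : affineSpan ℝ D → Ω → ℝ) ⁻¹' D) := by
    simp only [Set.mem_preimage, hc0]; exact hx
  obtain ⟨ε, hε, hball⟩ := Metric.isOpen_iff.mp hopen 0 h0mem
  refine ⟨ε/2, by linarith, ?_⟩
  have hmem2 : c (ε/2) ∈ interior (((↑) : affineSpan ℝ D → Ω → ℝ) ⁻¹' D) := by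
    apply hball
    rw [Metric.mem_ball, Real.dist_eq, sub_zero, abs_of_pos (by linarith)]
    linarith
  have h2 : c (ε/2) ∈ (((↑) : affineSpan ℝ D → Ω → ℝ) ⁻¹' D) := interior_subset hmem2
  exact h2

lemma down_step {D : Set (Ω → ℝ)} (hDc : Convex ℝ D) {p₀ : Ω → ℝ} (hp₀ : p₀ ∈ D)
    (w : Ω → ℝ) {ε δ : ℝ} (hε : 0 ≤ ε) (hεδ : ε ≤ δ) (hδ : p₀ + δ • w ∈ D) :
    p₀ + ε • w ∈ D := by
  rcases eq_or_lt_of_le (hε.trans hεδ) with h0 | h0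
  · have : ε = 0 := le_antisymm (hεδ.trans h0.symm.le) hε
    simpa [this] using hp₀
  · have hb : ε/δ ≤ 1 := by rw [div_le_one h0]; exact hεδ
    have hb0 : 0 ≤ ε/δ := div_nonneg hε h0.le
    have := hDc hp₀ hδ (by linarith : (0:ℝ) ≤ 1 - ε/δ) hb0 (by ring)
    convert this using 1
    match_scalars
    · ring
    · field_simp
lemma key_lemma {D D' : Set (Ω → ℝ)} {ψ ψ' : (Ω → ℝ) → ℝ} {π : FinDist Ω}
    (h : extInt D ψ π = extInt D' ψ' π) (hs : (π.w.support : Set (Ω → ℝ)) ⊆ D) :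
    (π.w.support : Set (Ω → ℝ)) ⊆ D' ∧ eVal π ψ = eVal π ψ' := by
  rw [extInt, if_pos hs] at h
  by_cases hs' : (π.w.support : Set (Ω → ℝ)) ⊆ D'
  · rw [extInt, if_pos hs'] at h
    exact ⟨hs', by exact_mod_cast h⟩
  · rw [extInt, if_neg hs'] at h
    exact absurd h (by simp)

lemma step_lemma {D : Set (Ω → ℝ)} {p₀ : Ω → ℝ} (hri : p₀ ∈ intrinsicInterior ℝ D)
    {p : Ω → ℝ} (hp : p ∈ D) :
    ∃ q ∈ D, ∃ t : ℝ, 0 < t ∧ t ≤ 1 ∧ p₀ = t • p + (1 - t) • q := by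
  have hp₀ : p₀ ∈ D := intrinsicInterior_subset hri
  obtain ⟨ε, hε, hq⟩ := small_step hri (p₀ - p)
    (vsub_mem_vectorSpan ℝ hp₀ hp)
  refine ⟨p₀ + ε • (p₀ - p), hq, ε/(1+ε), by positivity, ?_, ?_⟩
  · rw [div_le_one (by linarith)]; linarith
  · match_scalars <;> field_simp <;> ring
lemma domain_sub {D D' : Set (Ω → ℝ)} {ψ ψ' : (Ω → ℝ) → ℝ} {p₀ : Ω → ℝ}
    (hD : D ⊆ simplex Ω) (hri : p₀ ∈ intrinsicInterior ℝ D)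
    (heq : ∀ π : FinDist Ω, bary π = p₀ → extInt D ψ π = extInt D' ψ' π) : D ⊆ D' := by
  intro p hp
  obtain ⟨q, hq, t, ht0, ht1, hbar⟩ := step_lemma hri hp
  have ha : ∀ i, 0 ≤ (![t, 1-t, 0] : Fin 3 → ℝ) i := by
    intro i; fin_cases i <;> simp <;> linarith
  have hsum : ∑ i, (![t, 1-t, 0] : Fin 3 → ℝ) i = 1 := by
    simp [Fin.sum_univ_three]
  have hmem : ∀ i, (![p, q, q] : Fin 3 → Ω → ℝ) i ∈ simplex Ω := by
    intro i; fin_cases i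
    · exact hD hp
    · exact hD hq
    · exact hD hq
  set π := mk3 ![p, q, q] ![t, 1-t, 0] ha hsum hmem with hπ
  have hbary : bary π = p₀ := by
    rw [hπ, mk3_bary]
    simp [Fin.sum_univ_three]
    rw [hbar]
  have hsupp : (π.w.support : Set (Ω → ℝ)) ⊆ D := by
    intro x hx
    simp only [Finset.mem_coe] at hx
    obtain ⟨i, rfl⟩ := raw_supp ![p, q, q] ![t, 1-t, 0] x hx
    fin_cases i
    · exact hp
    · exact hq
    · exact hq
  obtain ⟨hs', -⟩ := key_lemma (heq π hbary) hsupp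
  have hge := raw_ge ![p, q, q] ![t, 1-t, 0] ha 0
  simp only [Matrix.cons_val_zero] at hge
  have hps : p ∈ π.w.support := Finsupp.mem_support_iff.mpr (ne_of_gt (lt_of_lt_of_le ht0 hge))
  exact hs' hps
lemma affine_lemma {D D' : Set (Ω → ℝ)} {ψ ψ' : (Ω → ℝ) → ℝ} {p₀ : Ω → ℝ}
    (hD : D ⊆ simplex Ω) (hDc : Convex ℝ D) (hri : p₀ ∈ intrinsicInterior ℝ D)
    (heq : ∀ π : FinDist Ω, bary π = p₀ → extInt D ψ π = extInt D' ψ' π)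
    {p₁ p₂ : Ω → ℝ} (hp₁ : p₁ ∈ D) (hp₂ : p₂ ∈ D) {a b : ℝ}
    (ha : 0 ≤ a) (hb : 0 ≤ b) (hab : a + b = 1) :
    ψ (a • p₁ + b • p₂) - ψ' (a • p₁ + b • p₂)
      = a * (ψ p₁ - ψ' p₁) + b * (ψ p₂ - ψ' p₂) := by
  set r := a • p₁ + b • p₂ with hr
  have hrD : r ∈ D := hDc hp₁ hp₂ ha hb hab
  obtain ⟨q, hq, t, ht0, ht1, hbar⟩ := step_lemma hri hrD
  -- first distribution
  have ha1 : ∀ i, 0 ≤ (![t, 1-t, 0] : Fin 3 → ℝ) i := by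
    intro i; fin_cases i <;> simp <;> linarith
  have hsum1 : ∑ i, (![t, 1-t, 0] : Fin 3 → ℝ) i = 1 := by simp [Fin.sum_univ_three]
  have hmem1 : ∀ i, (![r, q, q] : Fin 3 → Ω → ℝ) i ∈ simplex Ω := by
    intro i; fin_cases i
    · exact hD hrD
    · exact hD hq
    · exact hD hq
  set π₁ := mk3 ![r, q, q] ![t, 1-t, 0] ha1 hsum1 hmem1 with hπ₁
  have hbary1 : bary π₁ = p₀ := by
    rw [hπ₁, mk3_bary]
    simp [Fin.sum_univ_three]
    rw [hbar]
  have hsupp1 : (π₁.w.support : Set (Ω → ℝ)) ⊆ D := by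
    intro x hx
    simp only [Finset.mem_coe] at hx
    obtain ⟨i, rfl⟩ := raw_supp ![r, q, q] ![t, 1-t, 0] x hx
    fin_cases i
    · exact hrD
    · exact hq
    · exact hq
  obtain ⟨-, he1⟩ := key_lemma (heq π₁ hbary1) hsupp1
  -- second distribution
  have ha2 : ∀ i, 0 ≤ (![t*a, t*b, 1-t] : Fin 3 → ℝ) i := by
    intro i; fin_cases i <;> simp
    · positivity
    · positivity
    · linarith
  have hsum2 : ∑ i, (![t*a, t*b, 1-t] : Fin 3 → ℝ) i = 1 := by
    simp [Fin.sum_univ_three]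
    linear_combination t * hab
  have hmem2 : ∀ i, (![p₁, p₂, q] : Fin 3 → Ω → ℝ) i ∈ simplex Ω := by
    intro i; fin_cases i
    · exact hD hp₁
    · exact hD hp₂
    · exact hD hq
  set π₂ := mk3 ![p₁, p₂, q] ![t*a, t*b, 1-t] ha2 hsum2 hmem2 with hπ₂
  have hbary2 : bary π₂ = p₀ := by
    rw [hπ₂, mk3_bary, hbar, hr]
    simp [Fin.sum_univ_three]
    module
  have hsupp2 : (π₂.w.support : Set (Ω → ℝ)) ⊆ D := by
    intro x hx
    simp only [Finset.mem_coe] at hx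
    obtain ⟨i, rfl⟩ := raw_supp ![p₁, p₂, q] ![t*a, t*b, 1-t] x hx
    fin_cases i
    · exact hp₁
    · exact hp₂
    · exact hq
  obtain ⟨-, he2⟩ := key_lemma (heq π₂ hbary2) hsupp2
  rw [hπ₁, mk3_eVal, mk3_eVal] at he1
  rw [hπ₂, mk3_eVal, mk3_eVal] at he2
  simp [Fin.sum_univ_three] at he1 he2
  have h3 : t * (ψ r - ψ' r) = t * (a * (ψ p₁ - ψ' p₁) + b * (ψ p₂ - ψ' p₂)) := by
    linear_combination he1 - he2
  exact mul_left_cancel₀ (ne_of_gt ht0) h3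

end Aux

/-- two canonical measures of uncertainty representing the same
posterior-separable cost have the same domain and differ by an affine function
vanishing at `p₀`. -/
theorem stmt3 (p₀ : Ω → ℝ) (D D' : Set (Ω → ℝ)) (hD : D ⊆ simplex Ω) (hD' : D' ⊆ simplex Ω)
    (ψ ψ' : (Ω → ℝ) → ℝ) (hconv : ConvexOn ℝ D ψ) (hconv' : ConvexOn ℝ D' ψ')
    (hz : ψ p₀ = 0) (hz' : ψ' p₀ = 0)
    (hri : p₀ ∈ intrinsicInterior ℝ D) (hri' : p₀ ∈ intrinsicInterior ℝ D')
    (heq : ∀ π : FinDist Ω, bary π = p₀ → extInt D ψ π = extInt D' ψ' π) :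
    D = D' ∧ ∃ ξ : Ω → ℝ, ∀ p ∈ D, ψ p = ψ' p + ∑ ω, ξ ω * (p ω - p₀ ω) := by
  classical
  have hDc : Convex ℝ D := hconv.1
  have hp₀D : p₀ ∈ D := intrinsicInterior_subset hri
  refine ⟨Set.Subset.antisymm (domain_sub hD hri heq)
      (domain_sub hD' hri' (fun π h => (heq π h).symm)), ?_⟩
  -- the affine-difference property
  have haff : ∀ x ∈ D, ∀ y ∈ D, ∀ a b : ℝ, 0 ≤ a → 0 ≤ b → a + b = 1 →
      ψ (a • x + b • y) - ψ' (a • x + b • y) = a * (ψ x - ψ' x) + b * (ψ y - ψ' y) :=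
    fun x hx y hy a b ha hb hab => affine_lemma hD hDc hri heq hx hy ha hb hab
  -- small steps in each direction of the span
  have hsmall : ∀ w ∈ vectorSpan ℝ D, ∃ ε : ℝ, 0 < ε ∧ p₀ + ε • w ∈ D :=
    fun w hw => small_step hri w hw
  choose! eps heps hval using hsmall
  -- one-sided rescaling identity
  have hmono : ∀ (w : Ω → ℝ) (ε δ : ℝ), 0 < ε → ε ≤ δ → p₀ + ε • w ∈ D → p₀ + δ • w ∈ D →
      ψ (p₀ + ε • w) - ψ' (p₀ + ε • w) = (ε/δ) * (ψ (p₀ + δ • w) - ψ' (p₀ + δ • w)) := by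
    intro w ε δ hε hεδ h1 h2
    have hδ : 0 < δ := lt_of_lt_of_le hε hεδ
    have harg : p₀ + ε • w = (ε/δ) • (p₀ + δ • w) + (1 - ε/δ) • p₀ := by
      match_scalars <;> field_simp <;> ring
    have hb0 : 0 ≤ ε/δ := by positivity
    have hb1 : 0 ≤ 1 - ε/δ := by
      rw [sub_nonneg, div_le_one hδ]; exact hεδ
    rw [harg, haff _ h2 _ hp₀D _ _ hb0 hb1 (by ring), hz, hz']
    ring
  -- well-definedness of slopes
  have hwd : ∀ (w : Ω → ℝ) (ε δ : ℝ), 0 < ε → 0 < δ → p₀ + ε • w ∈ D → p₀ + δ • w ∈ D →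
      (ψ (p₀ + ε • w) - ψ' (p₀ + ε • w))/ε = (ψ (p₀ + δ • w) - ψ' (p₀ + δ • w))/δ := by
    intro w ε δ hε hδ h1 h2
    rcases le_total ε δ with h | h
    · rw [hmono w ε δ hε h h1 h2]
      field_simp
    · rw [hmono w δ ε hδ h h2 h1]
      field_simp
  set g : (Ω → ℝ) → ℝ :=
    fun w => (ψ (p₀ + eps w • w) - ψ' (p₀ + eps w • w)) / eps w with hgdef
  have hg : ∀ w ∈ vectorSpan ℝ D, ∀ ε : ℝ, 0 < ε → p₀ + ε • w ∈ D →
      g w = (ψ (p₀ + ε • w) - ψ' (p₀ + ε • w))/ε :=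
    fun w hw ε h1 h2 => hwd w (eps w) ε (heps w hw) h1 (hval w hw) h2
  have hgD : ∀ p ∈ D, g (p - p₀) = ψ p - ψ' p := by
    intro p hp
    have h1 : p₀ + (1:ℝ) • (p - p₀) = p := by module
    rw [hg (p - p₀) (vsub_mem_vectorSpan ℝ hp hp₀D) 1 one_pos (by rw [h1]; exact hp), h1]
    simp
  -- additivity
  have hadd : ∀ w₁ ∈ vectorSpan ℝ D, ∀ w₂ ∈ vectorSpan ℝ D, g (w₁ + w₂) = g w₁ + g w₂ := by
    intro w₁ h₁ w₂ h₂
    have h₃ : w₁ + w₂ ∈ vectorSpan ℝ D := Submodule.add_mem _ h₁ h₂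
    have e1 := heps w₁ h₁
    have e2 := heps w₂ h₂
    have e3 := heps (w₁ + w₂) h₃
    set ε := min (min (eps w₁) (eps w₂) / 2) (eps (w₁ + w₂)) with hε
    have hε0 : 0 < ε := lt_min (by positivity) e3
    have hm1 := min_le_left (min (eps w₁) (eps w₂) / 2) (eps (w₁ + w₂))
    have hm2 := min_le_left (eps w₁) (eps w₂)
    have hm3 := min_le_right (eps w₁) (eps w₂)
    have hm4 := min_le_right (min (eps w₁) (eps w₂) / 2) (eps (w₁ + w₂))
    have ha1 : p₀ + (2*ε) • w₁ ∈ D :=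
      down_step hDc hp₀D w₁ (by linarith) (by linarith) (hval w₁ h₁)
    have ha2 : p₀ + (2*ε) • w₂ ∈ D :=
      down_step hDc hp₀D w₂ (by linarith) (by linarith) (hval w₂ h₂)
    have ha3 : p₀ + ε • (w₁ + w₂) ∈ D :=
      down_step hDc hp₀D (w₁ + w₂) (by linarith) (by linarith) (hval (w₁ + w₂) h₃)
    have harg : p₀ + ε • (w₁ + w₂)
        = (1/2 : ℝ) • (p₀ + (2*ε) • w₁) + (1/2 : ℝ) • (p₀ + (2*ε) • w₂) := by
      match_scalars <;> ring
    have hhalf := haff _ ha1 _ ha2 (1/2) (1/2) (by norm_num) (by norm_num) (by norm_num)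
    rw [hg (w₁ + w₂) h₃ ε hε0 ha3, hg w₁ h₁ (2*ε) (by linarith) ha1,
      hg w₂ h₂ (2*ε) (by linarith) ha2, harg, hhalf]
    field_simp
  -- negation
  have hneg : ∀ w ∈ vectorSpan ℝ D, g (-w) = - g w := by
    intro w hw
    have hmw : -w ∈ vectorSpan ℝ D := Submodule.neg_mem _ hw
    have e1 := heps w hw
    have e2 := heps (-w) hmw
    set ε := min (eps w) (eps (-w)) with hε
    have hε0 : 0 < ε := lt_min e1 e2
    have hm1 := min_le_left (eps w) (eps (-w))
    have hm2 := min_le_right (eps w) (eps (-w))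
    have ha1 : p₀ + ε • w ∈ D :=
      down_step hDc hp₀D w (by linarith) (by linarith) (hval w hw)
    have ha2 : p₀ + ε • (-w) ∈ D :=
      down_step hDc hp₀D (-w) (by linarith) (by linarith) (hval (-w) hmw)
    have harg : p₀ = (1/2 : ℝ) • (p₀ + ε • w) + (1/2 : ℝ) • (p₀ + ε • (-w)) := by
      match_scalars <;> ring
    have hhalf := haff _ ha1 _ ha2 (1/2) (1/2) (by norm_num) (by norm_num) (by norm_num)
    rw [← harg, hz, hz'] at hhalf
    rw [hg (-w) hmw ε hε0 ha2, hg w hw ε hε0 ha1]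
    simp only [smul_neg] at hhalf ⊢
    field_simp
    linarith
  -- homogeneity
  have hsmul : ∀ (c : ℝ), ∀ w ∈ vectorSpan ℝ D, g (c • w) = c * g w := by
    have hpos : ∀ (c : ℝ), 0 < c → ∀ w ∈ vectorSpan ℝ D, g (c • w) = c * g w := by
      intro c hc w hw
      have hcw : c • w ∈ vectorSpan ℝ D := Submodule.smul_mem _ c hw
      have e1 := heps w hw
      have harg : (eps w / c) • (c • w) = eps w • w := by
        rw [smul_smul, div_mul_cancel₀ _ (ne_of_gt hc)]
      have hmem : p₀ + (eps w / c) • (c • w) ∈ D := by rw [harg]; exact hval w hw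
      rw [hg (c • w) hcw (eps w / c) (by positivity) hmem, harg,
        hg w hw (eps w) e1 (hval w hw)]
      field_simp
    intro c w hw
    rcases lt_trichotomy c 0 with hc | hc | hc
    · have h1 : c • w = (-c) • (-w) := by module
      rw [h1, hpos (-c) (by linarith) (-w) (Submodule.neg_mem _ hw), hneg w hw]
      ring
    · subst hc
      have e0 := heps 0 (Submodule.zero_mem _)
      rw [zero_smul, hgdef]
      simp [hz, hz']
    · exact hpos c hc w hw
  -- build the linear functional and extend it
  obtain ⟨Φ, hΦ⟩ := LinearMap.exists_extend
    ({ toFun := fun v => g v.1,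
       map_add' := fun v₁ v₂ => hadd v₁.1 v₁.2 v₂.1 v₂.2,
       map_smul' := fun c v => hsmul c v.1 v.2 } : vectorSpan ℝ D →ₗ[ℝ] ℝ)
  refine ⟨fun ω => Φ (Pi.single ω 1), ?_⟩
  intro p hp
  have hmemV : p - p₀ ∈ vectorSpan ℝ D := vsub_mem_vectorSpan ℝ hp hp₀D
  have h1 : Φ (p - p₀) = ψ p - ψ' p := by
    have h0 : Φ (p - p₀) = g (p - p₀) := DFunLike.congr_fun hΦ ⟨p - p₀, hmemV⟩
    rw [h0, hgD p hp]
  have hx : (p - p₀) = ∑ ω, (p ω - p₀ ω) • (Pi.single ω (1:ℝ) : Ω → ℝ) := by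
    funext j
    simp [Pi.single_apply, Finset.sum_ite_eq]
  have h2 : Φ (p - p₀) = ∑ ω, Φ (Pi.single ω 1) * (p ω - p₀ ω) := by
    rw [hx, map_sum]
    refine Finset.sum_congr rfl fun ω _ => ?_
    rw [map_smul, smul_eq_mul]
    ring
  rw [h2] at h1
  linarith
end

section
/- Fix a convex function ψ̄: ℝ^M → ℝ∪{∞}, points p̄₁,…,p̄_K, and λ_i ∈ ∂ψ̄(p̄_i) with λ_i + δ ∈ ∂ψ̄(p̄_i) for all i, where δ·(p̄_i − p̄₀) = 0 for all i and p̄₀ ∈ co{p̄₁,…,p̄_K}. Define the piecewise-affine function φ(p̄) = max_i [λ_i·(p̄ − p̄_i) + ψ̄(p̄_i)]. Then φ ≤ ψ̄ everywhere, φ(p̄_i) = ψ̄(p̄_i) for each i, and for N = φ − ψ̄ both the zero hyperplane and the hyperplane p̄ ↦ −δ·(p̄ − p̄₀) are optimal supports: N ≤ 0, N(p̄_i) = 0, and N(p̄) ≤ −δ·(p̄ − p̄₀) for all p̄ in the domain of ψ̄. -/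
open Finset

/-- Euclidean dot product on `ℝ^M`. -/
def dotp {M : ℕ} (a b : Fin M → ℝ) : ℝ := ∑ j, a j * b j

/-- The subdifferential of `ψ` at `y`, relative to the domain `Y`. -/
def subdiff {M : ℕ} (Y : Set (Fin M → ℝ)) (ψ : (Fin M → ℝ) → ℝ) (y : Fin M → ℝ) :
    Set (Fin M → ℝ) :=
  {l | ∀ q ∈ Y, dotp l (q - y) ≤ ψ q - ψ y}


lemma dotp_zero {M : ℕ} (a : Fin M → ℝ) : dotp a 0 = 0 := by
  simp [dotp]

lemma dotp_add_left {M : ℕ} (a b c : Fin M → ℝ) :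
    dotp (a + b) c = dotp a c + dotp b c := by
  simp [dotp, add_mul, Finset.sum_add_distrib]

lemma dotp_sub_right {M : ℕ} (a b c : Fin M → ℝ) :
    dotp a (b - c) = dotp a b - dotp a c := by
  simp [dotp, mul_sub, Finset.sum_sub_distrib]

/-- if `λᵢ, λᵢ + δ ∈ ∂ψ̄(p̄ᵢ)` with `δ ⊥ (p̄ᵢ − p̄₀)` and
`p̄₀ ∈ co{p̄ᵢ}`, then the piecewise-affine `φ(q) = maxᵢ [λᵢ·(q − p̄ᵢ) + ψ̄(p̄ᵢ)]`
satisfies `φ ≤ ψ̄`, touches `ψ̄` at each `p̄ᵢ`, and the net utility `N = φ − ψ̄`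
is supported both by the zero hyperplane and by `q ↦ −δ·(q − p̄₀)`. -/
theorem stmt7 {M : ℕ} {ι : Type*} [Fintype ι] [Nonempty ι]
    (Y : Set (Fin M → ℝ)) (ψ : (Fin M → ℝ) → ℝ) (hconv : ConvexOn ℝ Y ψ)
    (p : ι → (Fin M → ℝ)) (hpY : ∀ i, p i ∈ Y)
    (p₀ : Fin M → ℝ) (hco : p₀ ∈ convexHull ℝ (Set.range p))
    (lam : ι → (Fin M → ℝ)) (δ : Fin M → ℝ)
    (hlam : ∀ i, lam i ∈ subdiff Y ψ (p i))
    (hlamδ : ∀ i, lam i + δ ∈ subdiff Y ψ (p i))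
    (hδ : ∀ i, dotp δ (p i - p₀) = 0) :
    (∀ q ∈ Y, (⨆ i, (dotp (lam i) (q - p i) + ψ (p i))) ≤ ψ q) ∧
    (∀ i, (⨆ j, (dotp (lam j) (p i - p j) + ψ (p j))) = ψ (p i)) ∧
    (∀ q ∈ Y, (⨆ i, (dotp (lam i) (q - p i) + ψ (p i))) - ψ q ≤ 0) ∧
    (∀ i, (⨆ j, (dotp (lam j) (p i - p j) + ψ (p j))) - ψ (p i) = 0) ∧
    (∀ q ∈ Y, (⨆ i, (dotp (lam i) (q - p i) + ψ (p i))) - ψ q ≤ - dotp δ (q - p₀)) := by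
  have hbdd : ∀ q : Fin M → ℝ, BddAbove (Set.range fun i => dotp (lam i) (q - p i) + ψ (p i)) :=
    fun q => (Set.finite_range _).bddAbove
  have h1 : ∀ q ∈ Y, (⨆ i, (dotp (lam i) (q - p i) + ψ (p i))) ≤ ψ q := by
    intro q hq
    exact ciSup_le fun i => by linarith [hlam i q hq]
  have h2 : ∀ i, (⨆ j, (dotp (lam j) (p i - p j) + ψ (p j))) = ψ (p i) := by
    intro i
    refine le_antisymm (h1 (p i) (hpY i)) ?_
    have := le_ciSup (hbdd (p i)) i
    simpa [dotp_zero] using this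
  refine ⟨h1, h2, fun q hq => by linarith [h1 q hq], fun i => by linarith [h2 i], ?_⟩
  intro q hq
  rw [sub_le_iff_le_add]
  refine ciSup_le fun i => ?_
  have hs := hlamδ i q hq
  have hd : dotp δ (q - p i) = dotp δ (q - p₀) := by
    have h0 := hδ i
    rw [dotp_sub_right] at h0 ⊢
    rw [dotp_sub_right]
    linarith
  rw [dotp_add_left, hd] at hs
  linarith
end

section
/- Suppose the preference over menus is represented by V(φ_F) = max_{π∈Π(p₀)} ∫(φ_F − ψ) dπ for convex ψ, and suppose for every menu F the set Λ_F of optimal supporting hyperplane slopes is a singleton (unique hyperplane property). Then Independence of Irrelevant Alternatives holds: if V(φ_F) = V(φ_{F∩G}) = V(φ_G), then V(φ_{F∪G}) = V(φ_F). -/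
open Finset

/-- A finitely supported probability distribution over posteriors `y ∈ Y ⊆ ℝ^M`
with barycenter `x₀` (an element of `Π(p̄₀)` after translation to `ℝ^M`). -/
structure DistOn {M : ℕ} (Y : Set (Fin M → ℝ)) (x₀ : Fin M → ℝ) where
  w : (Fin M → ℝ) →₀ ℝ
  nonneg : ∀ p, 0 ≤ w p
  total : w.sum (fun _ x => x) = 1
  supp : ∀ p ∈ w.support, p ∈ Y
  bary : w.sum (fun p x => x • p) = x₀

/-- Expected value of `f` under a distribution over posteriors. -/
def eValM {M : ℕ} {Y : Set (Fin M → ℝ)} {x₀ : Fin M → ℝ} (π : DistOn Y x₀)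
    (f : (Fin M → ℝ) → ℝ) : ℝ :=
  π.w.sum (fun p x => x * f p)

/-- `φ_F` for a menu `F` of acts with affine utilities `q ↦ a·q + b`, `(a, b) ∈ F`. -/
noncomputable def phiMenuM {M : ℕ} (F : Finset ((Fin M → ℝ) × ℝ)) (q : Fin M → ℝ) : ℝ :=
  sSup ((fun ab => dotp ab.1 q + ab.2) '' (F : Set ((Fin M → ℝ) × ℝ)))

/-- `Λ_F`: the set of slopes of optimal supporting hyperplanes of `N*_F = φ_F − ψ̄`
through `(x₀, v)`, where `v = V(φ_F)`. -/
def Lam {M : ℕ} (Y : Set (Fin M → ℝ)) (ψ : (Fin M → ℝ) → ℝ) (x₀ : Fin M → ℝ)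
    (F : Finset ((Fin M → ℝ) × ℝ)) (v : ℝ) : Set (Fin M → ℝ) :=
  {l | ∀ y ∈ Y, phiMenuM F y - ψ y ≤ dotp l (y - x₀) + v}


lemma dotp_sub' {M : ℕ} (l a b : Fin M → ℝ) : dotp l (a - b) = dotp l a - dotp l b := by
  simp [dotp, Pi.sub_apply, mul_sub, Finset.sum_sub_distrib]

lemma phiMenuM_mono {M : ℕ} {F G : Finset ((Fin M → ℝ) × ℝ)} (hF : F.Nonempty)
    (h : F ⊆ G) (y : Fin M → ℝ) : phiMenuM F y ≤ phiMenuM G y := by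
  apply csSup_le_csSup
  · exact (G.finite_toSet.image _).bddAbove
  · exact (hF.to_set.image _)
  · exact Set.image_mono (by exact_mod_cast h)

lemma phiMenuM_union_le {M : ℕ} {F G : Finset ((Fin M → ℝ) × ℝ)} (hF : F.Nonempty)
    (hG : G.Nonempty) (y : Fin M → ℝ) :
    phiMenuM (F ∪ G) y ≤ max (phiMenuM F y) (phiMenuM G y) := by
  apply csSup_le ((hF.mono Finset.subset_union_left).to_set.image _)
  rintro x ⟨ab, hab, rfl⟩
  rcases Finset.mem_union.1 (by exact_mod_cast hab) with h | h
  · exact le_max_of_le_left (le_csSup (F.finite_toSet.image _).bddAbove ⟨ab, by simpa, rfl⟩)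
  · exact le_max_of_le_right (le_csSup (G.finite_toSet.image _).bddAbove ⟨ab, by simpa, rfl⟩)

lemma eValM_mono {M : ℕ} {Y : Set (Fin M → ℝ)} {x₀ : Fin M → ℝ} (π : DistOn Y x₀)
    {f g : (Fin M → ℝ) → ℝ} (h : ∀ p ∈ Y, f p ≤ g p) : eValM π f ≤ eValM π g := by
  apply Finset.sum_le_sum
  intro p hp
  exact mul_le_mul_of_nonneg_left (h p (π.supp p hp)) (π.nonneg p)

lemma eValM_affine {M : ℕ} {Y : Set (Fin M → ℝ)} {x₀ : Fin M → ℝ} (π : DistOn Y x₀)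
    (l : Fin M → ℝ) (v : ℝ) : eValM π (fun q => dotp l (q - x₀) + v) = v := by
  have hbary : ∀ j, (∑ p ∈ π.w.support, π.w p * p j) = x₀ j := by
    intro j
    have := congrFun π.bary j
    simpa [Finsupp.sum, Finset.sum_apply] using this
  have htot : (∑ p ∈ π.w.support, π.w p) = 1 := π.total
  have h1 : (∑ p ∈ π.w.support, π.w p * dotp l p) = dotp l x₀ := by
    simp only [dotp, Finset.mul_sum]
    rw [Finset.sum_comm]
    refine Finset.sum_congr rfl fun j _ => ?_
    rw [← hbary j, Finset.mul_sum]
    refine Finset.sum_congr rfl fun p _ => by ring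
  unfold eValM Finsupp.sum
  simp only [dotp_sub', mul_add, mul_sub, Finset.sum_add_distrib, Finset.sum_sub_distrib,
    ← Finset.sum_mul, htot, h1]
  ring

/-- if the value of every menu is represented by
`V(φ_F) = max_π ∫(φ_F − ψ) dπ` and every menu has a unique optimal supporting
hyperplane, then Independence of Irrelevant Alternatives holds. -/
theorem stmt11 {M : ℕ} (Y : Set (Fin M → ℝ)) (ψ : (Fin M → ℝ) → ℝ)
    (hconv : ConvexOn ℝ Y ψ) (x₀ : Fin M → ℝ) (hx₀ : x₀ ∈ Y)
    (V : Finset ((Fin M → ℝ) × ℝ) → ℝ)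
    (hrep : ∀ F : Finset ((Fin M → ℝ) × ℝ), F.Nonempty →
      (∀ π : DistOn Y x₀, eValM π (fun q => phiMenuM F q - ψ q) ≤ V F) ∧
      (∃ π : DistOn Y x₀, eValM π (fun q => phiMenuM F q - ψ q) = V F))
    (hUHP : ∀ F : Finset ((Fin M → ℝ) × ℝ), F.Nonempty → ∃! l, l ∈ Lam Y ψ x₀ F (V F)) :
    ∀ F G : Finset ((Fin M → ℝ) × ℝ), (F ∩ G).Nonempty →
      V F = V (F ∩ G) → V G = V (F ∩ G) → V (F ∪ G) = V F := by
  intro F G hFG hVF hVG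
  have hF : F.Nonempty := hFG.mono Finset.inter_subset_left
  have hG : G.Nonempty := hFG.mono Finset.inter_subset_right
  have hFU : (F ∪ G).Nonempty := hF.mono Finset.subset_union_left
  obtain ⟨lF, hlF, -⟩ := hUHP F hF
  obtain ⟨lG, hlG, -⟩ := hUHP G hG
  obtain ⟨lI, hlI, huI⟩ := hUHP (F ∩ G) hFG
  have hFI : lF = lI := by
    refine huI lF fun y hy => ?_
    calc phiMenuM (F ∩ G) y - ψ y ≤ phiMenuM F y - ψ y := by
          have := phiMenuM_mono hFG Finset.inter_subset_left y; linarith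
      _ ≤ dotp lF (y - x₀) + V F := hlF y hy
      _ = dotp lF (y - x₀) + V (F ∩ G) := by rw [hVF]
  have hGI : lG = lI := by
    refine huI lG fun y hy => ?_
    calc phiMenuM (F ∩ G) y - ψ y ≤ phiMenuM G y - ψ y := by
          have := phiMenuM_mono hFG Finset.inter_subset_right y; linarith
      _ ≤ dotp lG (y - x₀) + V G := hlG y hy
      _ = dotp lG (y - x₀) + V (F ∩ G) := by rw [hVG]
  have hU : ∀ y ∈ Y, phiMenuM (F ∪ G) y - ψ y ≤ dotp lF (y - x₀) + V F := by
    intro y hy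
    have h1 := hlF y hy
    have h2 := hlG y hy
    have h3 := phiMenuM_union_le hF hG y
    have hVFG : V G = V F := by rw [hVF, hVG]
    rw [hFI, ← hGI] at h1
    rcases max_cases (phiMenuM F y) (phiMenuM G y) with ⟨heq, -⟩ | ⟨heq, -⟩ <;>
      rw [heq] at h3
    · have := hlF y hy; linarith
    · rw [hGI, ← hFI] at h2; linarith [h2, hVFG]
  obtain ⟨hub, π, hπ⟩ := hrep (F ∪ G) hFU
  obtain ⟨hubF, πF, hπF⟩ := hrep F hF
  apply le_antisymm
  · calc V (F ∪ G) = eValM π (fun q => phiMenuM (F ∪ G) q - ψ q) := hπ.symm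
      _ ≤ eValM π (fun q => dotp lF (q - x₀) + V F) := eValM_mono π hU
      _ = V F := eValM_affine π lF (V F)
  · calc V F = eValM πF (fun q => phiMenuM F q - ψ q) := hπF.symm
      _ ≤ eValM πF (fun q => phiMenuM (F ∪ G) q - ψ q) :=
          eValM_mono πF fun p _ => by
            have := phiMenuM_mono (G := F ∪ G) hF Finset.subset_union_left p; linarith
      _ ≤ V (F ∪ G) := hub πF
end

section
/- Consider Ω = {0,1} with prior p₀ = 1/2 and ψ(p) = |p − 1/2| + (p − 1/2)². With affine payoffs u_a(p) = 2.5p − 1.3125 and u_b(p) = −2.5p + 1.1875 and the zero act, one has: cav(max{0, u_a} − ψ)(1/2) = 0, cav(max{0, u_b} − ψ)(1/2) = 0, and cav(0 − ψ)(1/2) = 0, yet cav(max{0, u_a, u_b} − ψ)(1/2) > 0. -/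
open Finset

/-- A finitely supported probability measure on posteriors `p ∈ [0,1]` (two states)
with mean `m`. -/
structure Dist1 (m : ℝ) where
  w : ℝ →₀ ℝ
  nonneg : ∀ p, 0 ≤ w p
  total : w.sum (fun _ x => x) = 1
  supp : ∀ p ∈ w.support, p ∈ Set.Icc (0:ℝ) 1
  mean : w.sum (fun p x => x * p) = m

/-- Concavification at the prior `1/2`: the supremum of `∫N dπ` over Bayes-plausible
distributions of posteriors. -/
noncomputable def cavHalf (N : ℝ → ℝ) : ℝ :=
  sSup {v | ∃ π : Dist1 (1/2), v = π.w.sum (fun p x => x * N p)}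

/-- The kinked measure of uncertainty `ψ(p) = |p − 1/2| + (p − 1/2)²`. -/
noncomputable def ψex (p : ℝ) : ℝ := |p - 1/2| + (p - 1/2)^2

/-- Expected utility of act `a`. -/
noncomputable def ua (p : ℝ) : ℝ := 2.5 * p - 1.3125

/-- Expected utility of act `b`. -/
noncomputable def ub (p : ℝ) : ℝ := -2.5 * p + 1.1875

/-- Any Bayes-plausible expectation of `N` is bounded by any affine majorant of `N`
evaluated at the prior `1/2`. -/
lemma sum_le_affine (N : ℝ → ℝ) (α β : ℝ)
    (h : ∀ p ∈ Set.Icc (0:ℝ) 1, N p ≤ α + β * p) (π : Dist1 (1/2)) :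
    π.w.sum (fun p x => x * N p) ≤ α + β * (1/2) := by
  have h1 : π.w.sum (fun p x => x * N p) ≤ π.w.sum (fun p x => x * (α + β * p)) := by
    apply Finset.sum_le_sum
    intro p hp
    exact mul_le_mul_of_nonneg_left (h p (π.supp p hp)) (π.nonneg p)
  have h2 : π.w.sum (fun p x => x * (α + β * p))
      = α * π.w.sum (fun _ x => x) + β * π.w.sum (fun p x => x * p) := by
    rw [Finsupp.sum, Finsupp.sum, Finsupp.sum, Finset.mul_sum, Finset.mul_sum,
      ← Finset.sum_add_distrib]
    exact Finset.sum_congr rfl (fun p _ => by ring)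
  rw [π.total, π.mean] at h2
  linarith

lemma bddAbove_cav (N : ℝ → ℝ) (α β : ℝ)
    (h : ∀ p ∈ Set.Icc (0:ℝ) 1, N p ≤ α + β * p) :
    BddAbove {v | ∃ π : Dist1 (1/2), v = π.w.sum (fun p x => x * N p)} := by
  refine ⟨α + β * (1/2), ?_⟩
  rintro v ⟨π, rfl⟩
  exact sum_le_affine N α β h π

/-- The Dirac measure at `1/2`. -/
noncomputable def diracHalf : Dist1 (1/2) where
  w := Finsupp.single (1/2) 1
  nonneg := by
    intro p
    rw [Finsupp.single_apply]
    split <;> norm_num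
  total := by rw [Finsupp.sum_single_index] ; rfl
  supp := by
    intro p hp
    have := Finsupp.support_single_subset hp
    simp only [Finset.mem_singleton] at this
    subst this
    constructor <;> norm_num
  mean := by rw [Finsupp.sum_single_index] <;> simp

lemma cav_eq_zero (N : ℝ → ℝ) (α β : ℝ) (hαβ : α + β * (1/2) = 0)
    (h : ∀ p ∈ Set.Icc (0:ℝ) 1, N p ≤ α + β * p) (h0 : N (1/2) = 0) :
    cavHalf N = 0 := by
  unfold cavHalf
  apply le_antisymm
  · apply Real.sSup_le _ le_rfl
    rintro v ⟨π, rfl⟩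
    have := sum_le_affine N α β h π
    linarith
  · apply le_csSup (bddAbove_cav N α β h)
    refine ⟨diracHalf, ?_⟩
    show (0:ℝ) = (Finsupp.single (1/2:ℝ) (1:ℝ)).sum (fun p x => x * N p)
    rw [Finsupp.sum_single_index (by simp), h0]
    ring

/-- The two-point measure putting weight 1/2 at `1/4` and `3/4`. -/
noncomputable def twoPoint : Dist1 (1/2) where
  w := Finsupp.single (1/4) (1/2) + Finsupp.single (3/4) (1/2)
  nonneg := by
    intro p
    rw [Finsupp.add_apply, Finsupp.single_apply, Finsupp.single_apply]
    split <;> split <;> norm_num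
  total := by
    rw [Finsupp.sum_add_index (by simp) (by simp),
      Finsupp.sum_single_index rfl, Finsupp.sum_single_index rfl]
    norm_num
  supp := by
    intro p hp
    have h := Finsupp.support_add hp
    rw [Finset.mem_union] at h
    rcases h with h | h <;>
    · have := Finsupp.support_single_subset h
      simp only [Finset.mem_singleton] at this
      subst this
      constructor <;> norm_num
  mean := by
    rw [Finsupp.sum_add_index (by simp) (by intros; ring),
      Finsupp.sum_single_index (by ring), Finsupp.sum_single_index (by ring)]
    norm_num

/-- with the kinked cost `ψex`, the menus `{0,a}`, `{0,b}`, `{0}` all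
have value 0 at prior `1/2`, yet the union `{0,a,b}` has strictly positive value,
violating IIA. -/
theorem stmt14 :
    cavHalf (fun p => max 0 (ua p) - ψex p) = 0 ∧
    cavHalf (fun p => max 0 (ub p) - ψex p) = 0 ∧
    cavHalf (fun p => 0 - ψex p) = 0 ∧
    0 < cavHalf (fun p => max (max 0 (ua p)) (ub p) - ψex p) := by
  have hψhalf : ψex (1/2) = 0 := by simp [ψex]
  have hua : ∀ p ∈ Set.Icc (0:ℝ) 1, max 0 (ua p) - ψex p ≤ -(1/2) + 1 * p := by
    intro p _
    have h1 : p - 1/2 ≤ |p - 1/2| := le_abs_self _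
    have h2 : -(p - 1/2) ≤ |p - 1/2| := neg_le_abs _
    rw [sub_le_iff_le_add]
    apply max_le
    · unfold ψex; nlinarith
    · unfold ua ψex; nlinarith [sq_nonneg (p - 3/4)]
  have hub : ∀ p ∈ Set.Icc (0:ℝ) 1, max 0 (ub p) - ψex p ≤ 1/2 + (-1) * p := by
    intro p _
    have h1 : p - 1/2 ≤ |p - 1/2| := le_abs_self _
    have h2 : -(p - 1/2) ≤ |p - 1/2| := neg_le_abs _
    rw [sub_le_iff_le_add]
    apply max_le
    · unfold ψex; nlinarith
    · unfold ub ψex; nlinarith [sq_nonneg (p - 1/4)]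
  have huab : ∀ p ∈ Set.Icc (0:ℝ) 1,
      max (max 0 (ua p)) (ub p) - ψex p ≤ 2 + 0 * p := by
    intro p hp
    obtain ⟨hp0, hp1⟩ := hp
    have hψ : 0 ≤ ψex p := by
      unfold ψex
      have := abs_nonneg (p - 1/2)
      nlinarith
    rw [sub_le_iff_le_add]
    apply max_le
    apply max_le
    · nlinarith
    · unfold ua; nlinarith
    · unfold ub; nlinarith
  refine ⟨?_, ?_, ?_, ?_⟩
  · apply cav_eq_zero _ (-(1/2)) 1 (by norm_num) hua
    simp only [hψhalf, sub_zero]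
    rw [max_eq_left]
    unfold ua; norm_num
  · apply cav_eq_zero _ (1/2) (-1) (by norm_num) hub
    simp only [hψhalf, sub_zero]
    rw [max_eq_left]
    unfold ub; norm_num
  · apply cav_eq_zero _ 0 0 (by norm_num)
    · intro p _
      have hψ : 0 ≤ ψex p := by
        unfold ψex
        have := abs_nonneg (p - 1/2)
        nlinarith
      linarith
    · show (0:ℝ) - ψex (1/2) = 0
      rw [hψhalf]; ring
  · have hmem : (1/4 : ℝ) ∈ {v | ∃ π : Dist1 (1/2),
        v = π.w.sum (fun p x => x * (max (max 0 (ua p)) (ub p) - ψex p))} := by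
      refine ⟨twoPoint, ?_⟩
      show (1/4:ℝ) = (Finsupp.single (1/4:ℝ) (1/2:ℝ) + Finsupp.single (3/4:ℝ) (1/2:ℝ)).sum _
      rw [Finsupp.sum_add_index (by simp) (by intros; ring),
        Finsupp.sum_single_index (by ring), Finsupp.sum_single_index (by ring)]
      have e1 : max (max 0 (ua (1/4))) (ub (1/4)) - ψex (1/4) = 1/4 := by
        have h1 : max 0 (ua (1/4)) = 0 := max_eq_left (by unfold ua; norm_num)
        rw [h1, max_eq_right (by unfold ub; norm_num)]
        unfold ub ψex
        rw [abs_of_nonpos (by norm_num)]; norm_num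
      have e2 : max (max 0 (ua (3/4))) (ub (3/4)) - ψex (3/4) = 1/4 := by
        have h1 : max 0 (ua (3/4)) = ua (3/4) := max_eq_right (by unfold ua; norm_num)
        rw [h1, max_eq_left (by unfold ua ub; norm_num)]
        unfold ua ψex
        rw [abs_of_nonneg (by norm_num)]; norm_num
      rw [e1, e2]
      norm_num
    have hle := le_csSup (bddAbove_cav _ 2 0 huab) hmem
    unfold cavHalf
    linarith
end

section
/- If F ⊆ H where H = {h : V(φ_{\{0,h\}}) = V(φ_{\{0\}})} is the set of acts irrelevant to the zero act, then V(φ_{F∪{0}}) = V(φ_{\{0\}}), provided the preference satisfies IIA (V(φ_F) = V(φ_{F∩G}) = V(φ_G) implies V(φ_{F∪G}) = V(φ_F)). -/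
open Finset

variable {Ω : Type*} [Fintype Ω]

/-- `φ_F(p) = max_{f ∈ F} Σ_ω f(ω) p(ω)` for a menu `F` of utility acts `f : Ω → ℝ`. -/
noncomputable def phiU (F : Finset (Ω → ℝ)) (p : Ω → ℝ) : ℝ :=
  sSup ((fun f => ∑ ω, f ω * p ω) '' (F : Set (Ω → ℝ)))

/-- under IIA, if every act in `F` is irrelevant to the zero act
(`V(φ_{{0,f}}) = V(φ_{{0}})`), then so is the whole menu: `V(φ_{F ∪ {0}}) = V(φ_{{0}})`. -/
theorem stmt18 (p₀ : Ω → ℝ) (c : FinDist Ω → EReal)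
    (hIIA : ∀ F G : Finset (Ω → ℝ), F.Nonempty → G.Nonempty → (F ∩ G).Nonempty →
      V c p₀ (phiU F) = V c p₀ (phiU (F ∩ G)) → V c p₀ (phiU G) = V c p₀ (phiU (F ∩ G)) →
      V c p₀ (phiU (F ∪ G)) = V c p₀ (phiU F))
    (F : Finset (Ω → ℝ)) (hF : F.Nonempty)
    (hFH : ∀ f ∈ F, V c p₀ (phiU {0, f}) = V c p₀ (phiU {0})) :
    V c p₀ (phiU (insert 0 F)) = V c p₀ (phiU {0}) := by
  classical
  induction F using Finset.induction_on with
  | empty => exact absurd hF (by simp)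
  | @insert f S hfS ih =>
    by_cases hS : S.Nonempty
    · by_cases hf0 : f = 0
      · subst hf0
        rw [Finset.insert_idem]
        exact ih hS (fun g hg => hFH g (Finset.mem_insert_of_mem hg))
      · have hfA : f ∉ insert (0 : Ω → ℝ) S := by
          simp [hfS, hf0]
        have hAB : insert (0 : Ω → ℝ) S ∩ {0, f} = {0} := by
          ext g
          simp only [Finset.mem_inter, Finset.mem_insert, Finset.mem_singleton]
          constructor
          · rintro ⟨hg1, hg2 | hg2⟩
            · exact hg2
            · subst hg2
              rcases hg1 with h | h
              · exact absurd h hf0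
              · exact absurd h hfS
          · rintro rfl; exact ⟨Or.inl rfl, Or.inl rfl⟩
        have hA : V c p₀ (phiU (insert 0 S)) = V c p₀ (phiU {0}) :=
          ih hS (fun g hg => hFH g (Finset.mem_insert_of_mem hg))
        have hB : V c p₀ (phiU {0, f}) = V c p₀ (phiU {0}) :=
          hFH f (Finset.mem_insert_self f S)
        have hU : insert (0 : Ω → ℝ) S ∪ {0, f} = insert 0 (insert f S) := by
          ext g
          simp only [Finset.mem_union, Finset.mem_insert, Finset.mem_singleton]
          tauto
        have := hIIA (insert 0 S) {0, f} (Finset.insert_nonempty _ _)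
          (Finset.insert_nonempty _ _)
          (by rw [hAB]; exact Finset.singleton_nonempty _)
          (by rw [hAB]; exact hA) (by rw [hAB]; exact hB)
        rw [hU] at this
        rw [this, hA]
    · have hSe : S = ∅ := Finset.not_nonempty_iff_eq_empty.mp hS
      subst hSe
      exact hFH f (Finset.mem_insert_self f ∅)
end
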